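/- For arbitrary scalars p and q, the skew-symmetric bilinear map φ_4(p,q) on h_2 defined by φ_4(e_1,e_4) = (p+q)e_1, φ_4(e_2,e_3) = −e_1, φ_4(e_2,e_4) = q e_2, φ_4(e_3,e_4) = e_2 + p e_3, φ_4(e_4,e_5) = −(2p+q)e_5, and zero otherwise, is a 2-cocycle of h_2 with adjoint coefficients. -/
import Mathlib

noncomputable section

/-- The underlying space of the 5-dimensional Heisenberg Lie algebra `h₂`. -/
abbrev V : Type := Fin 5 → ℝ

/-- Basis vectors: `e 0, …, e 4` are `e₁, …, e₅`. -/
def e (i : Fin 5) : V := Pi.single i 1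

/-- The Heisenberg bracket on `h₂`: `[e₁,e₃] = e₅`, `[e₂,e₄] = e₅`. -/
def br (x y : V) : V :=
  (x 0 * y 2 - x 2 * y 0 + x 1 * y 3 - x 3 * y 1) • e 4

/-- The deformed bracket `[x,y]_t = [x,y] + t • φ x y`. -/
def brt (t : ℝ) (φ : V → V → V) (x y : V) : V := br x y + t • φ x y

/-- The Chevalley–Eilenberg 2-cocycle condition (adjoint coefficients) for a
skew-symmetric 2-cochain `φ` on `h₂`. -/
def IsCocycle (φ : V → V → V) : Prop :=
  ∀ x y z : V,
    φ (br x y) z - φ (br x z) y + φ (br y z) x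
      - br x (φ y z) + br y (φ x z) - br z (φ x y) = 0

/-- `φ₄(p,q)`: `(e₁,e₄) ↦ (p+q)e₁`, `(e₂,e₃) ↦ −e₁`, `(e₂,e₄) ↦ q e₂`, `(e₃,e₄) ↦ e₂ + p e₃`, `(e₄,e₅) ↦ −(2p+q)e₅`, zero otherwise. -/
def phi4 (p q : ℝ) (x y : V) : V :=
  (x 0 * y 3 - x 3 * y 0) • ((p + q) • e 0)
  + (x 1 * y 2 - x 2 * y 1) • (-e 0)
  + (x 1 * y 3 - x 3 * y 1) • (q • e 1)
  + (x 2 * y 3 - x 3 * y 2) • (e 1 + p • e 2)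
  + (x 3 * y 4 - x 4 * y 3) • ((-(2*p + q)) • e 4)

/-- For arbitrary scalars `p, q`, the cochain `φ₄(p,q)` is a 2-cocycle of `h₂`
with adjoint coefficients. -/
theorem phi4_isCocycle (p q : ℝ) : IsCocycle (phi4 p q) := by
  intro x y z
  funext i
  fin_cases i <;>
    simp [phi4, br, e, Pi.single_apply] <;> ring

end
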